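/- There is a universal constant C > 0 such that: for every k ∈ ℝ with |k| ≥ 1, every t ≥ 0, and all functions ψ, w : [−1,1] → ℂ with ψ three times continuously differentiable, w twice continuously differentiable, ψ(±1) = 0, w(±1) = 0, and ψ''(y) − k² ψ(y) = −w(y) on (−1,1), the function ψ₁ := ψ' + i k t ψ satisfies |k|² ( ‖ψ₁'‖²_{L²} + k² ‖ψ₁‖²_{L²} )^{1/2} ≤ C (1+t)^{−1} ( ‖(e_{k,t} w)''‖²_{L²} + k² ‖(e_{k,t} w)'‖²_{L²} + k⁴ ‖w‖²_{L²} )^{1/2}, where e_{k,t}(y) = e^{i k y t} and derivatives of e_{k,t} w are taken in y. -/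

import Mathlib

open Set MeasureTheory

/-- The squared `L²` norm of a function on the interval `(-1, 1)`. -/
noncomputable def L2sq (h : ℝ → ℂ) : ℝ :=
  ∫ y in (-1 : ℝ)..1, ‖h y‖ ^ 2

/-- The function `y ↦ e^{ikyt} w(y)`. -/
noncomputable def ew (k t : ℝ) (w : ℝ → ℂ) : ℝ → ℂ :=
  fun y => Complex.exp (Complex.I * (k : ℂ) * (y : ℂ) * (t : ℂ)) * w y

noncomputable def nm (h : ℝ → ℂ) : ℝ := Real.sqrt (L2sq h)

local notation "conj'" => starRingEnd ℂ

lemma L2sq_nonneg (h : ℝ → ℂ) : 0 ≤ L2sq h :=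
  intervalIntegral.integral_nonneg (by norm_num) (fun y _ => by positivity)

lemma nm_nonneg (h : ℝ → ℂ) : 0 ≤ nm h := Real.sqrt_nonneg _

lemma nm_sq (h : ℝ → ℂ) : nm h ^ 2 = L2sq h := Real.sq_sqrt (L2sq_nonneg h)

lemma int_congr {E : Type*} [NormedAddCommGroup E] [NormedSpace ℝ E] {f g : ℝ → E}
    (h : ∀ y ∈ Ioo (-1:ℝ) 1, f y = g y) :
    ∫ y in (-1:ℝ)..1, f y = ∫ y in (-1:ℝ)..1, g y := by
  apply intervalIntegral.integral_congr_ae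
  have hsub : {x : ℝ | ¬ (x ∈ Set.uIoc (-1:ℝ) 1 → f x = g x)} ⊆ {1} := by
    intro x hx
    simp only [mem_setOf_eq, _root_.not_imp] at hx
    obtain ⟨hx1, hx2⟩ := hx
    rw [Set.uIoc_of_le (by norm_num : (-1:ℝ) ≤ 1)] at hx1
    by_contra hne
    simp only [mem_singleton_iff] at hne
    exact hx2 (h x ⟨hx1.1, lt_of_le_of_ne hx1.2 hne⟩)
  exact MeasureTheory.ae_iff.mpr (measure_mono_null hsub (by simp))

lemma L2sq_congr {f g : ℝ → ℂ} (h : ∀ y ∈ Ioo (-1:ℝ) 1, f y = g y) :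
    L2sq f = L2sq g :=
  int_congr (fun y hy => by rw [h y hy])

lemma nm_congr {f g : ℝ → ℂ} (h : ∀ y ∈ Ioo (-1:ℝ) 1, f y = g y) :
    nm f = nm g := by unfold nm; rw [L2sq_congr h]

lemma integral_sq_expand {f g : ℝ → ℂ} (hf : Continuous f) (hg : Continuous g) (lam : ℝ) :
    ∫ y in (-1:ℝ)..1, (lam * ‖f y‖ + ‖g y‖)^2
      = lam^2 * L2sq f + 2*lam*(∫ y in (-1:ℝ)..1, ‖f y‖*‖g y‖) + L2sq g := by
  have h1 : ∀ y : ℝ, (lam * ‖f y‖ + ‖g y‖)^2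
      = lam^2*‖f y‖^2 + 2*lam*(‖f y‖*‖g y‖) + ‖g y‖^2 := fun y => by ring
  simp_rw [h1]
  rw [intervalIntegral.integral_add, intervalIntegral.integral_add,
    intervalIntegral.integral_const_mul, intervalIntegral.integral_const_mul]
  · rfl
  · exact ((continuous_const.mul (hf.norm.pow 2))).intervalIntegrable _ _
  · exact ((continuous_const.mul (hf.norm.mul hg.norm))).intervalIntegrable _ _
  · exact (((continuous_const.mul (hf.norm.pow 2))).add
      ((continuous_const.mul (hf.norm.mul hg.norm)))).intervalIntegrable _ _
  · exact ((hg.norm.pow 2)).intervalIntegrable _ _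

lemma L2_CS {f g : ℝ → ℂ} (hf : Continuous f) (hg : Continuous g) :
    ∫ y in (-1:ℝ)..1, ‖f y‖ * ‖g y‖ ≤ Real.sqrt (L2sq f) * Real.sqrt (L2sq g) := by
  set A := L2sq f with hA
  set B := L2sq g with hB
  set C := ∫ y in (-1:ℝ)..1, ‖f y‖ * ‖g y‖ with hC
  have hCnn : 0 ≤ C := intervalIntegral.integral_nonneg (by norm_num) (fun y _ => by positivity)
  have key : ∀ lam : ℝ, 0 ≤ A * (lam*lam) + (2*C) * lam + B := by
    intro lam
    have h0 : 0 ≤ ∫ y in (-1:ℝ)..1, (lam*‖f y‖ + ‖g y‖)^2 :=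
      intervalIntegral.integral_nonneg (by norm_num) (fun y _ => sq_nonneg _)
    rw [integral_sq_expand hf hg] at h0
    nlinarith [h0]
  have hd := discrim_le_zero key
  rw [discrim] at hd
  have hsq : C^2 ≤ A*B := by nlinarith [hd]
  calc C = Real.sqrt (C^2) := (Real.sqrt_sq hCnn).symm
    _ ≤ Real.sqrt (A*B) := Real.sqrt_le_sqrt hsq
    _ = Real.sqrt A * Real.sqrt B := Real.sqrt_mul (L2sq_nonneg f) _

lemma abs_re_int_le {f g : ℝ → ℂ} (hf : Continuous f) (hg : Continuous g) :
    |(∫ y in (-1:ℝ)..1, f y * conj' (g y)).re| ≤ nm f * nm g := by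
  have h2 : ‖∫ y in (-1:ℝ)..1, f y * conj' (g y)‖
      ≤ ∫ y in (-1:ℝ)..1, ‖f y * conj' (g y)‖ :=
    intervalIntegral.norm_integral_le_integral_norm (by norm_num)
  have h3 : (∫ y in (-1:ℝ)..1, ‖f y * conj' (g y)‖)
      = ∫ y in (-1:ℝ)..1, ‖f y‖ * ‖g y‖ := by
    congr 1; funext y; simp [norm_mul]
  calc |(∫ y in (-1:ℝ)..1, f y * conj' (g y)).re|
      ≤ ‖∫ y in (-1:ℝ)..1, f y * conj' (g y)‖ := by
        exact Complex.abs_re_le_norm _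
    _ ≤ ∫ y in (-1:ℝ)..1, ‖f y‖ * ‖g y‖ := by rw [← h3]; exact h2
    _ ≤ nm f * nm g := L2_CS hf hg

lemma nm_add_le {f g : ℝ → ℂ} (hf : Continuous f) (hg : Continuous g) :
    nm (fun y => f y + g y) ≤ nm f + nm g := by
  have h1 : L2sq (fun y => f y + g y) ≤ (nm f + nm g)^2 := by
    have hmono : L2sq (fun y => f y + g y) ≤ ∫ y in (-1:ℝ)..1, (1*‖f y‖+‖g y‖)^2 := by
      apply intervalIntegral.integral_mono_on (by norm_num)
      · exact ((hf.add hg).norm.pow 2).intervalIntegrable _ _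
      · exact (((continuous_const.mul hf.norm).add hg.norm).pow 2).intervalIntegrable _ _
      · intro y _
        have := norm_add_le (f y) (g y)
        have h0 : (0:ℝ) ≤ ‖f y + g y‖ := norm_nonneg _
        nlinarith
    rw [integral_sq_expand hf hg 1] at hmono
    have hcs : (∫ y in (-1:ℝ)..1, ‖f y‖*‖g y‖) ≤ nm f * nm g := L2_CS hf hg
    have e1 := nm_sq f; have e2 := nm_sq g
    nlinarith [hmono, hcs]
  have h2 := Real.sqrt_le_sqrt h1
  rwa [Real.sqrt_sq (add_nonneg (nm_nonneg f) (nm_nonneg g))] at h2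

lemma nm_const_mul (a : ℂ) (f : ℝ → ℂ) : nm (fun y => a * f y) = ‖a‖ * nm f := by
  unfold nm L2sq
  simp_rw [norm_mul, mul_pow]
  rw [intervalIntegral.integral_const_mul, Real.sqrt_mul (by positivity),
    Real.sqrt_sq (norm_nonneg a)]

lemma integral_mul_conj_self (f : ℝ → ℂ) :
    ∫ y in (-1:ℝ)..1, f y * conj' (f y) = ((L2sq f : ℝ) : ℂ) := by
  have h1 : ∀ y : ℝ, f y * conj' (f y) = ((‖f y‖^2 : ℝ) : ℂ) := fun y => by
    rw [Complex.mul_conj]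
    norm_cast
    rw [Complex.normSq_eq_norm_sq]
  simp_rw [h1]
  rw [intervalIntegral.integral_ofReal]
  rfl

lemma ibp {f g f' g' : ℝ → ℂ} (hf : ∀ y, HasDerivAt f (f' y) y) (hg : ∀ y, HasDerivAt g (g' y) y)
    (hf' : Continuous f') (hg' : Continuous g') :
    ∫ y in (-1:ℝ)..1, f y * conj' (g' y)
      = f 1 * conj' (g 1) - f (-1) * conj' (g (-1))
        - ∫ y in (-1:ℝ)..1, f' y * conj' (g y) := by
  have hG : ∀ y, HasDerivAt (fun z => conj' (g z)) (conj' (g' y)) y := by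
    intro y
    simpa only [RCLike.star_def] using (hg y).star
  exact intervalIntegral.integral_mul_deriv_eq_deriv_mul
    (fun x _ => hf x) (fun x _ => hG x)
    (hf'.intervalIntegrable _ _)
    (((Complex.continuous_conj).comp hg').intervalIntegrable _ _)

lemma ew_hasDerivAt (k t : ℝ) {h : ℝ → ℂ} {d : ℂ} {y : ℝ} (hh : HasDerivAt h d y) :
    HasDerivAt (ew k t h)
      (Complex.exp (Complex.I * (k:ℂ) * (y:ℂ) * (t:ℂ)) * (d + Complex.I * (k:ℂ) * (t:ℂ) * h y))
      y := by
  have h1 : HasDerivAt (fun z : ℝ => Complex.I * (k:ℂ) * (z:ℂ) * (t:ℂ))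
      (Complex.I * (k:ℂ) * (t:ℂ)) y := by
    have h0 : HasDerivAt (fun z : ℝ => ((z:ℝ):ℂ)) 1 y := by
      simpa using (hasDerivAt_id y).ofReal_comp
    have := (h0.const_mul (Complex.I * (k:ℂ))).mul_const ((t:ℂ))
    simpa [mul_assoc, mul_comm, mul_left_comm] using this
  have h2 := h1.cexp
  have h3 := h2.mul hh
  have : HasDerivAt (ew k t h)
      (Complex.exp (Complex.I * (k:ℂ) * (y:ℂ) * (t:ℂ)) * (Complex.I * (k:ℂ) * (t:ℂ)) * h y
        + Complex.exp (Complex.I * (k:ℂ) * (y:ℂ) * (t:ℂ)) * d) y := by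
    exact h3
  convert this using 1
  ring

lemma deriv_ew (k t : ℝ) {h : ℝ → ℂ} (hh : Differentiable ℝ h) :
    deriv (ew k t h) = ew k t (fun y => deriv h y + Complex.I * (k:ℂ) * (t:ℂ) * h y) := by
  funext y
  exact (ew_hasDerivAt k t (hh y).hasDerivAt).deriv

lemma L2sq_ew (k t : ℝ) (h : ℝ → ℂ) : L2sq (ew k t h) = L2sq h := by
  unfold L2sq ew
  have h1 : ∀ y : ℝ, ‖Complex.exp (Complex.I * (k:ℂ) * (y:ℂ) * (t:ℂ))‖ = 1 := by
    intro y
    rw [Complex.norm_exp]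
    simp
  simp_rw [norm_mul, h1, one_mul]

lemma cont_mul_conj {f g : ℝ → ℂ} (hf : Continuous f) (hg : Continuous g) :
    Continuous (fun y => f y * conj' (g y)) :=
  hf.mul (Complex.continuous_conj.comp hg)

lemma intI {f g : ℝ → ℂ} (hf : Continuous f) (hg : Continuous g) :
    IntervalIntegrable (fun y => f y * conj' (g y)) MeasureTheory.volume (-1:ℝ) 1 :=
  (cont_mul_conj hf hg).intervalIntegrable _ _

lemma intI2 {f g : ℝ → ℂ} (a : ℂ) (hf : Continuous f) (hg : Continuous g) :
    IntervalIntegrable (fun y => a * (f y * conj' (g y))) MeasureTheory.volume (-1:ℝ) 1 :=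
  (continuous_const.mul (cont_mul_conj hf hg)).intervalIntegrable _ _


set_option maxHeartbeats 2000000 in
/-- High-frequency estimate for `ψ₁ = ∂_y ψ + ikt ψ`:
`|k|² ‖(∂_y,k)ψ₁‖ ≤ C (1+t)^{-1} ‖(∂_y,k)²(e^{ikyt}w)‖` for `|k| ≥ 1`. -/
theorem psi1_highfreq :
    ∃ C > (0 : ℝ), ∀ (k t : ℝ) (ψ w : ℝ → ℂ),
      1 ≤ |k| → 0 ≤ t →
      ContDiff ℝ 3 ψ → ContDiff ℝ 2 w →
      ψ (-1) = 0 → ψ 1 = 0 → w (-1) = 0 → w 1 = 0 →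
      (∀ y ∈ Ioo (-1 : ℝ) 1, deriv (deriv ψ) y - (k : ℂ) ^ 2 * ψ y = -w y) →
      |k| ^ 2 * Real.sqrt
          (L2sq (deriv (fun y => deriv ψ y + Complex.I * (k : ℂ) * (t : ℂ) * ψ y))
            + k ^ 2 * L2sq (fun y => deriv ψ y + Complex.I * (k : ℂ) * (t : ℂ) * ψ y))
        ≤ C * (1 + t)⁻¹ * Real.sqrt
            (L2sq (deriv (deriv (ew k t w))) + k ^ 2 * L2sq (deriv (ew k t w))
              + k ^ 4 * L2sq w) := by
  refine ⟨4, by norm_num, ?_⟩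
  intro k t ψ w hk ht hψ hw hψm hψp hwm hwp heq
  have ht1 : (0:ℝ) < 1 + t := by linarith
  -- smoothness unpacking
  have u3 := contDiff_succ_iff_deriv.mp (hψ.of_le (le_refl 3) : ContDiff ℝ (2+1) ψ)
  have hdψ : Differentiable ℝ ψ := u3.1
  have u2 := contDiff_succ_iff_deriv.mp (u3.2.2.of_le (le_refl 2) : ContDiff ℝ (1+1) (deriv ψ))
  have hdψ' : Differentiable ℝ (deriv ψ) := u2.1
  have u1 := contDiff_one_iff_deriv.mp u2.2.2
  have hdψ'' : Differentiable ℝ (deriv (deriv ψ)) := u1.1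
  have cψ''' : Continuous (deriv (deriv (deriv ψ))) := u1.2
  have cψ : Continuous ψ := hψ.continuous
  have cψ' : Continuous (deriv ψ) := u3.2.2.continuous
  have cψ'' : Continuous (deriv (deriv ψ)) := u2.2.2.continuous
  have w2 := contDiff_succ_iff_deriv.mp (hw.of_le (le_refl 2) : ContDiff ℝ (1+1) w)
  have hdw : Differentiable ℝ w := w2.1
  have w1 := contDiff_one_iff_deriv.mp w2.2.2
  have hdw' : Differentiable ℝ (deriv w) := w1.1
  have cw : Continuous w := hw.continuous
  have cw' : Continuous (deriv w) := w2.2.2.continuous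
  have cw'' : Continuous (deriv (deriv w)) := w1.2
  set c : ℂ := Complex.I * (k:ℂ) * (t:ℂ) with hc
  set ψ₁ : ℝ → ℂ := fun y => deriv ψ y + c * ψ y with hψ₁def
  set W₁ : ℝ → ℂ := fun y => deriv w y + c * w y with hW₁def
  -- derivatives of ψ₁, W₁
  have hψ₁dAt : ∀ y, HasDerivAt ψ₁ (deriv (deriv ψ) y + c * deriv ψ y) y := fun y =>
    ((hdψ' y).hasDerivAt).add (((hdψ y).hasDerivAt).const_mul c)
  have hψ₁' : deriv ψ₁ = fun y => deriv (deriv ψ) y + c * deriv ψ y :=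
    funext fun y => (hψ₁dAt y).deriv
  have hdψ₁ : Differentiable ℝ ψ₁ := fun y => (hψ₁dAt y).differentiableAt
  have hψ₁'dAt : ∀ y, HasDerivAt (deriv ψ₁)
      (deriv (deriv (deriv ψ)) y + c * deriv (deriv ψ) y) y := by
    rw [hψ₁']
    exact fun y => ((hdψ'' y).hasDerivAt).add (((hdψ' y).hasDerivAt).const_mul c)
  have hdψ₁' : Differentiable ℝ (deriv ψ₁) := fun y => (hψ₁'dAt y).differentiableAt
  have hψ₁'' : deriv (deriv ψ₁) = fun y => deriv (deriv (deriv ψ)) y + c * deriv (deriv ψ) y :=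
    funext fun y => (hψ₁'dAt y).deriv
  have cψ₁ : Continuous ψ₁ := cψ'.add (continuous_const.mul cψ)
  have cψ₁' : Continuous (deriv ψ₁) := by
    rw [hψ₁']; exact cψ''.add (continuous_const.mul cψ')
  have cψ₁'' : Continuous (deriv (deriv ψ₁)) := by
    rw [hψ₁'']; exact cψ'''.add (continuous_const.mul cψ'')
  have hW₁dAt : ∀ y, HasDerivAt W₁ (deriv (deriv w) y + c * deriv w y) y := fun y =>
    ((hdw' y).hasDerivAt).add (((hdw y).hasDerivAt).const_mul c)
  have hdW₁ : Differentiable ℝ W₁ := fun y => (hW₁dAt y).differentiableAt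
  have hW₁' : deriv W₁ = fun y => deriv (deriv w) y + c * deriv w y :=
    funext fun y => (hW₁dAt y).deriv
  have cW₁ : Continuous W₁ := cw'.add (continuous_const.mul cw)
  have cW₁' : Continuous (deriv W₁) := by
    rw [hW₁']; exact cw''.add (continuous_const.mul cw')
  set W₂ : ℝ → ℂ := fun y => deriv W₁ y + c * W₁ y with hW₂def
  have cW₂ : Continuous W₂ := cW₁'.add (continuous_const.mul cW₁)
  -- rewrite RHS
  have hew1 : deriv (ew k t w) = ew k t W₁ := by
    rw [hW₁def, hc, deriv_ew k t hdw]
  have hew2 : deriv (deriv (ew k t w)) = ew k t W₂ := by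
    rw [hew1, hW₂def, hc, deriv_ew k t hdW₁]
  have hR : L2sq (deriv (deriv (ew k t w))) + k^2 * L2sq (deriv (ew k t w)) + k^4 * L2sq w
      = L2sq W₂ + k^2 * L2sq W₁ + k^4 * L2sq w := by
    rw [hew2, hew1, L2sq_ew, L2sq_ew]
  -- pointwise equation facts
  have heq2 : ∀ y ∈ Ioo (-1:ℝ) 1, deriv (deriv ψ) y = (k:ℂ)^2 * ψ y - w y := by
    intro y hy; have h := heq y hy; linear_combination h
  have hclose : EqOn (deriv (deriv ψ)) (fun y => (k:ℂ)^2 * ψ y - w y) (Icc (-1:ℝ) 1) := by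
    have h1 : EqOn (deriv (deriv ψ)) (fun y => (k:ℂ)^2 * ψ y - w y) (Ioo (-1:ℝ) 1) :=
      fun y hy => heq2 y hy
    have h2 := h1.closure cψ'' ((continuous_const.mul cψ).sub cw)
    rwa [closure_Ioo (by norm_num : (-1:ℝ) ≠ 1)] at h2
  have hb1 : deriv (deriv ψ) 1 = 0 := by
    have := hclose (right_mem_Icc.mpr (by norm_num))
    simpa [hψp, hwp] using this
  have hbm : deriv (deriv ψ) (-1) = 0 := by
    have := hclose (left_mem_Icc.mpr (by norm_num))
    simpa [hψm, hwm] using this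
  have hψ₁b1 : ψ₁ 1 = deriv ψ 1 := by simp only [hψ₁def]; rw [hψp]; ring
  have hψ₁bm : ψ₁ (-1) = deriv ψ (-1) := by simp only [hψ₁def]; rw [hψm]; ring
  have hψ₁'b1 : deriv ψ₁ 1 = c * ψ₁ 1 := by
    rw [hψ₁']; simp only; rw [hb1, hψ₁b1]; ring
  have hψ₁'bm : deriv ψ₁ (-1) = c * ψ₁ (-1) := by
    rw [hψ₁']; simp only; rw [hbm, hψ₁bm]; ring
  -- energy identity for ψ
  have ibp0 := ibp (f := deriv ψ) (g := ψ)
    (fun y => (hdψ' y).hasDerivAt) (fun y => (hdψ y).hasDerivAt) cψ'' cψ'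
  rw [hψp, hψm] at ibp0
  rw [integral_mul_conj_self (deriv ψ)] at ibp0
  simp only [map_zero, mul_zero, sub_zero, zero_sub] at ibp0
  have hA1 : (∫ y in (-1:ℝ)..1, deriv (deriv ψ) y * conj' (ψ y))
      = -((L2sq (deriv ψ) : ℝ):ℂ) := by linear_combination ibp0
  have hA2 : (∫ y in (-1:ℝ)..1, deriv (deriv ψ) y * conj' (ψ y))
      = ((k^2 * L2sq ψ : ℝ):ℂ) - ∫ y in (-1:ℝ)..1, w y * conj' (ψ y) := by
    have hcg : (∫ y in (-1:ℝ)..1, deriv (deriv ψ) y * conj' (ψ y))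
        = ∫ y in (-1:ℝ)..1,
            (((k^2:ℝ):ℂ) * (ψ y * conj' (ψ y)) - w y * conj' (ψ y)) := by
      apply int_congr; intro y hy; rw [heq2 y hy]; push_cast; ring
    rw [hcg, intervalIntegral.integral_sub, intervalIntegral.integral_const_mul,
      integral_mul_conj_self, ← Complex.ofReal_mul]
    · exact intI2 _ cψ cψ
    · exact intI cw cψ
  have hEn : k^2 * L2sq ψ ≤ nm w * nm ψ := by
    have h3 : ((k^2 * L2sq ψ : ℝ):ℂ) - (∫ y in (-1:ℝ)..1, w y * conj' (ψ y))
        = -((L2sq (deriv ψ):ℝ):ℂ) := by rw [← hA2]; exact hA1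
    have h4 := congrArg Complex.re h3
    simp only [Complex.sub_re, Complex.neg_re, Complex.ofReal_re] at h4
    have h5 : k^2 * L2sq ψ ≤ (∫ y in (-1:ℝ)..1, w y * conj' (ψ y)).re := by
      have := L2sq_nonneg (deriv ψ); linarith
    exact h5.trans ((le_abs_self _).trans (abs_re_int_le cw cψ))
  have F1 : k^2 * nm ψ ≤ nm w := by
    rcases eq_or_lt_of_le (nm_nonneg ψ) with h|h
    · rw [← h, mul_zero]; exact nm_nonneg w
    · have h7 : k^2 * (nm ψ)^2 ≤ nm w * nm ψ := by rw [nm_sq]; exact hEn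
      nlinarith [h7, h]
  -- equation for ψ₁
  have heqψ₁ : ∀ y ∈ Ioo (-1:ℝ) 1, deriv (deriv ψ₁) y = (k:ℂ)^2 * ψ₁ y - W₁ y := by
    intro y hy
    have hd3 : deriv (deriv (deriv ψ)) y = (k:ℂ)^2 * deriv ψ y - deriv w y := by
      have hev : deriv (deriv ψ) =ᶠ[nhds y] (fun z => (k:ℂ)^2 * ψ z - w z) :=
        Filter.eventuallyEq_of_mem (isOpen_Ioo.mem_nhds hy) (fun z hz => heq2 z hz)
      rw [hev.deriv_eq, deriv_fun_sub (((hdψ y).const_mul _)) (hdw y),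
        deriv_const_mul _ (hdψ y)]
    rw [hψ₁'']
    simp only
    rw [hd3, heq2 y hy]
    simp only [hψ₁def, hW₁def]
    ring
  -- energy identity for ψ₁
  have ibp1 := ibp (f := deriv ψ₁) (g := ψ₁)
    (fun y => (hdψ₁' y).hasDerivAt) (fun y => (hdψ₁ y).hasDerivAt) cψ₁'' cψ₁'
  rw [integral_mul_conj_self (deriv ψ₁)] at ibp1
  have hmid : (∫ y in (-1:ℝ)..1, deriv (deriv ψ₁) y * conj' (ψ₁ y))
      = ((k^2 * L2sq ψ₁ : ℝ):ℂ) - ∫ y in (-1:ℝ)..1, W₁ y * conj' (ψ₁ y) := by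
    have hcg : (∫ y in (-1:ℝ)..1, deriv (deriv ψ₁) y * conj' (ψ₁ y))
        = ∫ y in (-1:ℝ)..1,
            (((k^2:ℝ):ℂ) * (ψ₁ y * conj' (ψ₁ y)) - W₁ y * conj' (ψ₁ y)) := by
      apply int_congr; intro y hy; rw [heqψ₁ y hy]; push_cast; ring
    rw [hcg, intervalIntegral.integral_sub, intervalIntegral.integral_const_mul,
      integral_mul_conj_self, ← Complex.ofReal_mul]
    · exact intI2 _ cψ₁ cψ₁
    · exact intI cW₁ cψ₁
  have hBgen : ∀ z : ℂ, (c * z * conj' z).re = 0 := by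
    intro z
    rw [mul_assoc, Complex.mul_conj, hc]
    simp
  have hBre1 : (deriv ψ₁ 1 * conj' (ψ₁ 1)).re = 0 := by rw [hψ₁'b1]; exact hBgen _
  have hBre2 : (deriv ψ₁ (-1) * conj' (ψ₁ (-1))).re = 0 := by rw [hψ₁'bm]; exact hBgen _
  have hE : L2sq (deriv ψ₁) + k^2 * L2sq ψ₁
      = (∫ y in (-1:ℝ)..1, W₁ y * conj' (ψ₁ y)).re := by
    rw [hmid] at ibp1
    have h9 := congrArg Complex.re ibp1
    simp only [Complex.sub_re, Complex.ofReal_re] at h9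
    rw [hBre1, hBre2] at h9
    linarith
  -- integration by parts to move to W₂
  have hcj : conj' c = -c := by
    rw [hc]; simp [Complex.conj_I, Complex.conj_ofReal]
  have hstep5 : (∫ y in (-1:ℝ)..1, W₁ y * conj' (ψ₁ y))
      = - ∫ y in (-1:ℝ)..1, W₂ y * conj' (ψ y) := by
    have hp1 : ∀ y : ℝ, W₁ y * conj' (ψ₁ y)
        = W₁ y * conj' (deriv ψ y) + (-c) * (W₁ y * conj' (ψ y)) := by
      intro y
      simp only [hψ₁def]
      rw [map_add, map_mul, hcj]
      ring
    simp_rw [hp1]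
    rw [intervalIntegral.integral_add (intI cW₁ cψ') (intI2 _ cW₁ cψ),
      intervalIntegral.integral_const_mul]
    have ibp2 := ibp (f := W₁) (g := ψ)
      (fun y => (hdW₁ y).hasDerivAt) (fun y => (hdψ y).hasDerivAt) cW₁' cψ'
    rw [hψp, hψm] at ibp2
    simp only [map_zero, mul_zero, sub_zero, zero_sub] at ibp2
    rw [ibp2]
    have hsplit : (∫ y in (-1:ℝ)..1, W₂ y * conj' (ψ y))
        = (∫ y in (-1:ℝ)..1, deriv W₁ y * conj' (ψ y))
          + c * ∫ y in (-1:ℝ)..1, W₁ y * conj' (ψ y) := by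
      rw [← intervalIntegral.integral_const_mul, ← intervalIntegral.integral_add
        (intI cW₁' cψ) (intI2 _ cW₁ cψ)]
      apply int_congr
      intro y _
      simp only [hW₂def]
      ring
    rw [hsplit]
    ring
  have F3 : L2sq (deriv ψ₁) + k^2 * L2sq ψ₁ ≤ nm W₂ * nm ψ := by
    rw [hE, hstep5]
    have h10 := abs_re_int_le cW₂ cψ
    calc (-(∫ y in (-1:ℝ)..1, W₂ y * conj' (ψ y))).re
        = -(∫ y in (-1:ℝ)..1, W₂ y * conj' (ψ y)).re := by simp
      _ ≤ |(∫ y in (-1:ℝ)..1, W₂ y * conj' (ψ y)).re| := neg_le_abs _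
      _ ≤ nm W₂ * nm ψ := h10
  -- F2 : second derivative bound
  have F2 : nm (deriv (deriv ψ)) ≤ 2 * nm w := by
    have h1 : nm (deriv (deriv ψ)) = nm (fun y => ((k:ℂ)^2 * ψ y) + ((-1:ℂ) * w y)) :=
      nm_congr (fun y hy => by rw [heq2 y hy]; ring)
    rw [h1]
    have h2 := nm_add_le (f := fun y => (k:ℂ)^2 * ψ y) (g := fun y => (-1:ℂ) * w y)
      (continuous_const.mul cψ) (continuous_const.mul cw)
    rw [nm_const_mul, nm_const_mul] at h2
    have hn1 : ‖((k:ℂ))^2‖ = k^2 := by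
      rw [norm_pow, Complex.norm_real, Real.norm_eq_abs, sq_abs]
    have hn2 : ‖(-1:ℂ)‖ = 1 := by simp
    rw [hn1, hn2, one_mul] at h2
    linarith [F1]
  -- F4 : t² decay identity
  have F4 : k^2*t^2 * nm ψ ≤ nm (deriv ψ₁) + (|k| * t) * nm ψ₁ + nm (deriv (deriv ψ)) := by
    have hpt4 : ∀ y ∈ Ioo (-1:ℝ) 1, ((k^2*t^2:ℝ):ℂ) * ψ y
        = (deriv ψ₁ y + (-c) * ψ₁ y) + (-1:ℂ) * deriv (deriv ψ) y := by
      intro y _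
      rw [hψ₁']
      simp only [hψ₁def, hc]
      push_cast
      linear_combination (k:ℂ)^2*(t:ℂ)^2*(ψ y) * Complex.I_sq
    have h1 : nm (fun y => ((k^2*t^2:ℝ):ℂ) * ψ y)
        = nm (fun y => (deriv ψ₁ y + (-c) * ψ₁ y) + (-1:ℂ) * deriv (deriv ψ) y) :=
      nm_congr hpt4
    rw [nm_const_mul] at h1
    have hnorm1 : ‖((k^2*t^2:ℝ):ℂ)‖ = k^2*t^2 := by
      rw [Complex.norm_real, Real.norm_eq_abs, abs_of_nonneg (by positivity)]
    rw [hnorm1] at h1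
    have h2 := nm_add_le (f := fun y => deriv ψ₁ y + (-c) * ψ₁ y)
      (g := fun y => (-1:ℂ) * deriv (deriv ψ) y)
      (cψ₁'.add (continuous_const.mul cψ₁)) (continuous_const.mul cψ'')
    have h3 := nm_add_le (f := deriv ψ₁) (g := fun y => (-c) * ψ₁ y)
      cψ₁' (continuous_const.mul cψ₁)
    rw [nm_const_mul] at h2 h3
    have hnc : ‖-c‖ = |k| * t := by
      rw [hc]; simp only [norm_neg, norm_mul, Complex.norm_I, Complex.norm_real, one_mul]
      rw [Real.norm_eq_abs, Real.norm_eq_abs, abs_of_nonneg ht]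
    have hn2 : ‖(-1:ℂ)‖ = 1 := by simp
    rw [hnc] at h3
    rw [hn2, one_mul] at h2
    calc k^2*t^2*nm ψ
        = nm (fun y => (deriv ψ₁ y + (-c) * ψ₁ y) + (-1:ℂ) * deriv (deriv ψ) y) := h1
      _ ≤ nm (fun y => deriv ψ₁ y + (-c) * ψ₁ y) + nm (deriv (deriv ψ)) := h2
      _ ≤ (nm (deriv ψ₁) + (|k| * t) * nm ψ₁) + nm (deriv (deriv ψ)) := by linarith [h3]
  -- assembly
  rw [sq_abs, hR]
  set S := Real.sqrt (L2sq (deriv ψ₁) + k^2 * L2sq ψ₁) with hSdef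
  set N := Real.sqrt (L2sq W₂ + k^2 * L2sq W₁ + k^4 * L2sq w) with hNdef
  have hSnn : 0 ≤ S := Real.sqrt_nonneg _
  have hNnn : 0 ≤ N := Real.sqrt_nonneg _
  have hS2 : S^2 = L2sq (deriv ψ₁) + k^2 * L2sq ψ₁ :=
    Real.sq_sqrt (add_nonneg (L2sq_nonneg _) (mul_nonneg (sq_nonneg k) (L2sq_nonneg _)))
  have he1S : nm (deriv ψ₁) ≤ S :=
    Real.sqrt_le_sqrt (le_add_of_nonneg_right (mul_nonneg (sq_nonneg k) (L2sq_nonneg _)))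
  have he2S : |k| * nm ψ₁ ≤ S := by
    have h11 : |k| * nm ψ₁ = Real.sqrt (k^2 * L2sq ψ₁) := by
      rw [Real.sqrt_mul (sq_nonneg k), Real.sqrt_sq_eq_abs]; rfl
    rw [h11]
    exact Real.sqrt_le_sqrt (le_add_of_nonneg_left (L2sq_nonneg _))
  have hn2N : nm W₂ ≤ N := by
    apply Real.sqrt_le_sqrt
    have := mul_nonneg (sq_nonneg k) (L2sq_nonneg W₁)
    have h12 : (0:ℝ) ≤ k^4 * L2sq w := mul_nonneg (by positivity) (L2sq_nonneg w)
    linarith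
  have hk2mN : k^2 * nm w ≤ N := by
    have h13 : k^2 * nm w = Real.sqrt (k^4 * L2sq w) := by
      rw [show (k:ℝ)^4 = (k^2)^2 by ring, Real.sqrt_mul (sq_nonneg _),
        Real.sqrt_sq (sq_nonneg k)]; rfl
    rw [h13]
    apply Real.sqrt_le_sqrt
    have := L2sq_nonneg W₂
    have := mul_nonneg (sq_nonneg k) (L2sq_nonneg W₁)
    linarith
  have hF3' : S^2 ≤ nm W₂ * nm ψ := by rw [hS2]; exact F3
  set P := k^2*(1+t)*S with hPdef
  have hPnn : 0 ≤ P := mul_nonneg (mul_nonneg (sq_nonneg k) (le_of_lt ht1)) hSnn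
  have key1 : k^4 * (1+t)^2 * nm ψ ≤ 2*P + 6*N := by
    have h2' : nm (deriv ψ₁) + (|k| * t) * nm ψ₁ + nm (deriv (deriv ψ)) ≤ S + t*S + 2*nm w := by
      have h2a : (|k| * t)*nm ψ₁ = t*(|k| * nm ψ₁) := by ring
      have h2b := mul_le_mul_of_nonneg_left he2S ht
      linarith [he1S, F2]
    have e1 : k^2*(k^2*t^2*nm ψ) ≤ k^2*(S + t*S + 2*nm w) :=
      mul_le_mul_of_nonneg_left (F4.trans h2') (sq_nonneg k)
    have e2 : k^2*(k^2*nm ψ) ≤ k^2 * nm w :=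
      mul_le_mul_of_nonneg_left F1 (sq_nonneg k)
    have hx : (0:ℝ) ≤ k^4*nm ψ := by
      have := nm_nonneg ψ; positivity
    have e3 : k^4*(1+t)^2*nm ψ ≤ 2*(k^2*(k^2*nm ψ)) + 2*(k^2*(k^2*t^2*nm ψ)) := by
      nlinarith [mul_nonneg hx (sq_nonneg (1-t))]
    have e4 : k^2*(S + t*S + 2*nm w) = k^2*(1+t)*S + 2*(k^2*nm w) := by ring
    have e5 : k^2*nm w ≤ N := hk2mN
    calc k^4*(1+t)^2*nm ψ ≤ 2*(k^2*(k^2*nm ψ)) + 2*(k^2*(k^2*t^2*nm ψ)) := e3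
      _ ≤ 2*(k^2*nm w) + 2*(k^2*(1+t)*S + 2*(k^2*nm w)) := by
          rw [e4] at e1; linarith [e1, e2]
      _ = 2*(k^2*(1+t)*S) + 6*(k^2*nm w) := by ring
      _ ≤ 2*P + 6*N := by rw [hPdef]; linarith [e5]
  have key2 : P^2 ≤ 2*N*P + 6*N^2 := by
    have m0 : (0:ℝ) ≤ k^4*(1+t)^2 := by positivity
    have m1 : k^4*(1+t)^2*S^2 ≤ k^4*(1+t)^2*(nm W₂ * nm ψ) :=
      mul_le_mul_of_nonneg_left hF3' m0
    have m1' : P^2 = k^4*(1+t)^2*S^2 := by rw [hPdef]; ring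
    have m2' : k^4*(1+t)^2*(nm W₂ * nm ψ) = nm W₂ * (k^4*(1+t)^2*nm ψ) := by ring
    have m2 : nm W₂ * (k^4*(1+t)^2*nm ψ) ≤ nm W₂ * (2*P + 6*N) :=
      mul_le_mul_of_nonneg_left key1 (nm_nonneg W₂)
    have m3 : nm W₂ * (2*P + 6*N) ≤ N * (2*P + 6*N) :=
      mul_le_mul_of_nonneg_right hn2N (by linarith [hPnn, hNnn])
    calc P^2 = k^4*(1+t)^2*S^2 := m1'
      _ ≤ k^4*(1+t)^2*(nm W₂ * nm ψ) := m1
      _ = nm W₂ * (k^4*(1+t)^2*nm ψ) := m2'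
      _ ≤ nm W₂ * (2*P + 6*N) := m2
      _ ≤ N * (2*P + 6*N) := m3
      _ = 2*N*P + 6*N^2 := by ring
  have hP4N : P ≤ 4*N := by
    nlinarith [key2, hPnn, hNnn, mul_nonneg hNnn hPnn, sq_nonneg (P - 4*N), sq_nonneg N]
  have hfin : k^2*S*(1+t) ≤ 4*N := by
    have : k^2*S*(1+t) = P := by rw [hPdef]; ring
    linarith [hP4N, this]
  calc k^2*S = (k^2*S*(1+t))*(1+t)⁻¹ := by field_simp
    _ ≤ (4*N)*(1+t)⁻¹ := mul_le_mul_of_nonneg_right hfin (inv_nonneg.mpr (le_of_lt ht1))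
    _ = 4*(1+t)⁻¹*N := by ring
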